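/- Every anisotropic metric group (G,q) whose order is a power of 2 satisfies |G| ≤ 8. -/

import Mathlib

/-- The bicharacter associated with a `kˣ`-valued function `q` on `G`:
`b(g,h) = q(g+h) · q(g)⁻¹ · q(h)⁻¹`. -/
def bchar {k : Type*} [Field k] {G : Type*} [AddCommGroup G] (q : G → kˣ) (g h : G) : kˣ :=
  q (g + h) * (q g)⁻¹ * (q h)⁻¹

/-- `q : G → kˣ` is a quadratic form: `q (-g) = q g` for all `g`, and the associated
function `bchar q` is bimultiplicative. -/
structure IsQuadForm {k : Type*} [Field k] {G : Type*} [AddCommGroup G] (q : G → kˣ) : Prop where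
  map_neg : ∀ g : G, q (-g) = q g
  bchar_add_left : ∀ g₁ g₂ h : G, bchar q (g₁ + g₂) h = bchar q g₁ h * bchar q g₂ h
  bchar_add_right : ∀ g h₁ h₂ : G, bchar q g (h₁ + h₂) = bchar q g h₁ * bchar q g h₂

/-- The Gauss sum `τ⁺(G,q) = ∑_{g ∈ G} q(g)`, as an element of `k`. -/
noncomputable def tauPlus {k : Type*} [Field k] {G : Type*} [AddCommGroup G] (q : G → kˣ) : k :=
  ∑ᶠ g : G, (q g : k)

/-- The Gauss sum `τ⁻(G,q) = ∑_{g ∈ G} q(g)⁻¹`, as an element of `k`. -/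
noncomputable def tauMinus {k : Type*} [Field k] {G : Type*} [AddCommGroup G] (q : G → kˣ) : k :=
  ∑ᶠ g : G, (((q g)⁻¹ : kˣ) : k)

/-- Non-degeneracy of (the bicharacter associated with) `q` : the map
`g ↦ b(g, ·)` from `G` to `Hom(G, kˣ)` is injective. -/
def Nondeg {k : Type*} [Field k] {G : Type*} [AddCommGroup G] (q : G → kˣ) : Prop :=
  Function.Injective fun g : G => fun h : G => bchar q g h

/-- Isomorphism of pre-metric groups: a group isomorphism `φ : G₁ ≃ G₂`
with `q₂ ∘ φ = q₁`. -/
def PMIso {k : Type*} [Field k] {G₁ : Type*} [AddCommGroup G₁] {G₂ : Type*} [AddCommGroup G₂]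
    (q₁ : G₁ → kˣ) (q₂ : G₂ → kˣ) : Prop :=
  ∃ φ : G₁ ≃+ G₂, ∀ g : G₁, q₂ (φ g) = q₁ g

section Aux

variable {k : Type*} [Field k] {G : Type*} [AddCommGroup G]
variable {q : G → kˣ}

lemma q_add (q : G → kˣ) (g h : G) : q (g + h) = bchar q g h * q g * q h := by
  simp [bchar, mul_assoc]

lemma bchar_zero_left (hq : IsQuadForm q) (h : G) : bchar q 0 h = 1 := by
  have := hq.bchar_add_left 0 0 h
  rw [add_zero] at this
  have h2 : bchar q 0 h * 1 = bchar q 0 h * bchar q 0 h := by rw [mul_one]; exact this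
  exact (mul_left_cancel h2).symm

lemma bchar_zero_right (hq : IsQuadForm q) (g : G) : bchar q g 0 = 1 := by
  have := hq.bchar_add_right g 0 0
  rw [add_zero] at this
  have h2 : bchar q g 0 * 1 = bchar q g 0 * bchar q g 0 := by rw [mul_one]; exact this
  exact (mul_left_cancel h2).symm

lemma q_zero (hq : IsQuadForm q) : q 0 = 1 := by
  have h := bchar_zero_left hq (0 : G)
  rw [bchar, add_zero] at h
  rw [mul_inv_cancel, one_mul, inv_eq_one] at h
  exact h

lemma bchar_self (hq : IsQuadForm q) (g : G) : bchar q g g = q g ^ 2 := by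
  have h1 : bchar q g (g + -g) = bchar q g g * bchar q g (-g) := hq.bchar_add_right g g (-g)
  rw [add_neg_cancel, bchar_zero_right hq] at h1
  have h2 : bchar q g (-g) = (q g)⁻¹ ^ 2 := by
    rw [bchar, add_neg_cancel, q_zero hq, hq.map_neg]
    group
  rw [h2] at h1
  have := h1.symm
  rw [mul_comm] at this
  have h3 := eq_inv_of_mul_eq_one_right this
  rw [h3]; group

lemma bchar_nsmul_left (hq : IsQuadForm q) (n : ℕ) (g h : G) :
    bchar q (n • g) h = bchar q g h ^ n := by
  induction n with
  | zero => simpa using bchar_zero_left hq h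
  | succ n ih =>
    rw [succ_nsmul, hq.bchar_add_left, ih, pow_succ]

lemma q_nsmul (hq : IsQuadForm q) (n : ℕ) (g : G) : q (n • g) = q g ^ (n ^ 2) := by
  induction n with
  | zero => simpa using q_zero hq
  | succ n ih =>
    rw [succ_nsmul, q_add q, ih, bchar_nsmul_left hq, bchar_self hq, ← pow_mul, ← pow_add,
      ← pow_succ]
    ring_nf

lemma q_pow_two_mul (hq : IsQuadForm q) {N : ℕ} {g : G} (hN : N • g = 0) :
    q g ^ (2 * N) = 1 := by
  have h1 : q ((N + 1) • g) = q g := by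
    rw [add_nsmul, hN, one_nsmul, zero_add]
  rw [q_nsmul hq] at h1
  have h2 : q g ^ (N ^ 2) = 1 := by
    have := q_nsmul hq N g
    rw [hN, q_zero hq] at this
    exact this.symm
  have h3 : (N + 1) ^ 2 = N ^ 2 + (2 * N + 1) := by ring
  rw [h3, pow_add, h2, one_mul, pow_add, pow_one] at h1
  have h4 : q g ^ (2 * N) * q g = 1 * q g := by rw [one_mul]; exact h1
  exact mul_right_cancel h4

/-- square of a bicharacter value vanishes on 2-torsion (left). -/
lemma bchar_sq_left (hq : IsQuadForm q) {u : G} (hu : 2 • u = 0) (v : G) :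
    bchar q u v ^ 2 = 1 := by
  rw [← bchar_nsmul_left hq 2 u v, hu, bchar_zero_left hq]

lemma units_sq_cases {x : kˣ} (h : x ^ 2 = 1) : x = 1 ∨ x = -1 := by
  have hk : (x : k) ^ 2 = 1 := by simpa using congrArg Units.val h
  rcases sq_eq_one_iff.mp hk with h1 | h1
  · left; ext; simpa using h1
  · right; ext; simpa using h1

lemma units_neg_one_ne_one [CharZero k] : (-1 : kˣ) ≠ 1 := by
  intro h
  have : (-1 : k) = 1 := by simpa using congrArg Units.val h
  norm_num at this

lemma units_neg_one_mul_neg_one : (-1 : kˣ) * (-1) = 1 := by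
  ext; simp

lemma units_neg_one_inv : (-1 : kˣ)⁻¹ = -1 :=
  inv_eq_of_mul_eq_one_right units_neg_one_mul_neg_one

/-- The subgroup of 2-torsion elements where `q` squares to 1. -/
def Wsub (hq : IsQuadForm q) : AddSubgroup G where
  carrier := {g | 2 • g = 0 ∧ q g ^ 2 = 1}
  zero_mem' := ⟨smul_zero 2, by rw [q_zero hq, one_pow]⟩
  add_mem' := by
    rintro a b ⟨ha1, ha2⟩ ⟨hb1, hb2⟩
    refine ⟨by rw [smul_add, ha1, hb1, add_zero], ?_⟩
    rw [q_add q, mul_pow, mul_pow, ha2, hb2, mul_one, mul_one, bchar_sq_left hq ha1]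
  neg_mem' := by
    rintro a ⟨ha1, ha2⟩
    exact ⟨by rw [smul_neg, ha1, neg_zero], by rw [hq.map_neg, ha2]⟩

lemma mem_Wsub (hq : IsQuadForm q) {g : G} :
    g ∈ Wsub hq ↔ 2 • g = 0 ∧ q g ^ 2 = 1 := Iff.rfl

/-- On two-torsion, `-v = v`. -/
lemma neg_eq_self_of_two {v : G} (hv : 2 • v = 0) : -v = v := by
  have : v + v = 0 := by rw [← two_smul ℕ v]; exact hv
  exact neg_eq_of_add_eq_zero_left this

end Aux

/-- Every anisotropic metric group whose order is a power of `2`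
has order at most `8`. -/
theorem anisotropic_metric_two_group_card_le_eight
    {k : Type*} [Field k] [IsAlgClosed k] [CharZero k]
    {G : Type*} [AddCommGroup G] [Finite G]
    (q : G → kˣ) (hq : IsQuadForm q) (hnd : Nondeg q)
    (han : ∀ g : G, g ≠ 0 → q g ≠ 1)
    (hcard : ∃ m : ℕ, Nat.card G = 2 ^ m) :
    Nat.card G ≤ 8 := by
  classical
  obtain ⟨m, hm⟩ := hcard
  -- Step 1: the exponent of `G` divides 4.
  have h8to4 : ∀ g : G, 8 • g = 0 → 4 • g = 0 := by
    intro g h8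
    by_contra h4
    apply han _ h4
    have h16 : q g ^ 16 = 1 := by
      have := q_pow_two_mul hq h8
      norm_num at this
      exact this
    rw [q_nsmul hq]
    norm_num [h16]
  have hpow : ∀ (r : ℕ) (g : G), 2 ^ r • g = 0 → 4 • g = 0 := by
    intro r
    induction r with
    | zero =>
      intro g hg
      simp only [pow_zero, one_smul] at hg
      rw [hg, smul_zero]
    | succ n ih =>
      intro g hg
      have h2 : 2 ^ n • (2 • g) = 0 := by
        rw [smul_smul, ← pow_succ]; exact hg
      have h4 := ih _ h2
      rw [smul_smul] at h4
      exact h8to4 g (by norm_num at h4; exact h4)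
  have hexp : ∀ g : G, 4 • g = 0 := by
    intro g
    apply hpow m
    rw [← hm]
    exact card_nsmul_eq_zero'
  set W := Wsub hq with hWdef
  -- q = -1 on nonzero elements of W
  have hWq : ∀ v : G, v ∈ W → v ≠ 0 → q v = -1 := by
    intro v hv hv0
    exact (units_sq_cases ((mem_Wsub hq).mp hv).2).resolve_left (han v hv0)
  -- b = -1 on distinct nonzero elements of W
  have hWb : ∀ u v : G, u ∈ W → v ∈ W → u ≠ 0 → v ≠ 0 → u ≠ v → bchar q u v = -1 := by
    intro u v hu hv hu0 hv0 huv
    have hsum : u + v ∈ W := W.add_mem hu hv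
    have hsum0 : u + v ≠ 0 := by
      intro h0
      exact huv (by rw [← neg_eq_self_of_two ((mem_Wsub hq).mp hv).1]
                    exact eq_neg_of_add_eq_zero_left h0)
    rw [bchar, hWq _ hsum hsum0, hWq _ hu hu0, hWq _ hv hv0, units_neg_one_inv,
      units_neg_one_mul_neg_one, one_mul]
  -- |W| ≤ 4
  haveI : Fintype W := Fintype.ofFinite W
  have pick : ∀ (S : Finset W), S.card < Fintype.card W → ∃ z : W, z ∉ S := by
    intro S hS
    by_contra hc
    push_neg at hc
    have : S = Finset.univ := Finset.eq_univ_iff_forall.mpr hc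
    rw [this, Finset.card_univ] at hS
    omega
  have hWcard : Nat.card W ≤ 4 := by
    by_contra hlt
    push_neg at hlt
    rw [Nat.card_eq_fintype_card] at hlt
    obtain ⟨x, hx⟩ := pick {0} (by
      have := Finset.card_singleton (0 : W); omega)
    have hx0 : x ≠ 0 := by simpa using hx
    obtain ⟨y, hy⟩ := pick {0, x} (by
      have h1 := Finset.card_insert_le (0 : W) {x}
      have h2 := Finset.card_singleton x
      omega)
    simp only [Finset.mem_insert, Finset.mem_singleton, not_or] at hy
    obtain ⟨hy0, hyx⟩ := hy
    obtain ⟨z, hz⟩ := pick {0, x, y, x + y} (by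
      have h1 := Finset.card_insert_le (0 : W) ({x, y, x + y} : Finset W)
      have h2 := Finset.card_insert_le (x : W) ({y, x + y} : Finset W)
      have h3 := Finset.card_insert_le (y : W) ({x + y} : Finset W)
      have h4 := Finset.card_singleton (x + y : W)
      omega)
    simp only [Finset.mem_insert, Finset.mem_singleton, not_or] at hz
    obtain ⟨hz0, hzx, hzy, hzxy⟩ := hz
    -- x + y ≠ 0
    have hxy0 : x + y ≠ (0 : W) := by
      intro h0
      apply hyx
      have := neg_eq_self_of_two (((mem_Wsub hq).mp x.2).1)
      have h0' : (x : G) + y = 0 := by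
        have := congrArg (Subtype.val) h0
        simpa using this
      have : (y : G) = x := by
        rw [← neg_eq_self_of_two (((mem_Wsub hq).mp x.2).1)]
        exact eq_neg_of_add_eq_zero_right h0'
      exact Subtype.ext this
    -- contradiction via bilinearity
    have cne : ∀ a b : W, a ≠ b → (a : G) ≠ (b : G) := fun a b hab h =>
      hab (Subtype.ext h)
    have czero : ∀ a : W, a ≠ 0 → (a : G) ≠ 0 := fun a ha h => ha (Subtype.ext (by simpa using h))
    have hb := hq.bchar_add_right (z : G) (x : G) (y : G)
    have hcoe : (x : G) + (y : G) = ((x + y : W) : G) := rfl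
    rw [hcoe] at hb
    rw [hWb _ _ z.2 (x + y).2 (czero z hz0) (czero _ hxy0) (cne _ _ hzxy),
      hWb _ _ z.2 x.2 (czero z hz0) (czero x hx0) (cne _ _ hzx),
      hWb _ _ z.2 y.2 (czero z hz0) (czero y hy0) (cne _ _ hzy),
      units_neg_one_mul_neg_one] at hb
    exact units_neg_one_ne_one hb
  -- |W| ≤ 2 if there is an element of order 4
  have hWcard2 : (∃ g₀ : G, 2 • g₀ ≠ 0) → Nat.card W ≤ 2 := by
    rintro ⟨g₀, hg₀⟩
    have h4g₀ : (2 : ℕ) • (2 • g₀) = 0 := by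
      rw [smul_smul]
      have h := hexp g₀
      norm_num
      exact h
    have hwW : 2 • g₀ ∈ W := by
      rw [mem_Wsub]
      refine ⟨h4g₀, ?_⟩
      rw [q_nsmul hq 2 g₀, ← pow_mul]
      have := q_pow_two_mul hq (hexp g₀)
      norm_num at this ⊢
      exact this
    have hclaim : ∀ v : W, v = 0 ∨ (v : G) = 2 • g₀ := by
      intro v
      by_contra hc
      push_neg at hc
      obtain ⟨hv0, hvw⟩ := hc
      have hv0' : (v : G) ≠ 0 := fun h => hv0 (Subtype.ext (by simpa using h))
      have hbvw : bchar q (v : G) (2 • g₀) = -1 :=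
        hWb _ _ v.2 hwW hv0' hg₀ hvw
      have h1 : bchar q (v : G) (2 • g₀) = 1 := by
        rw [two_smul, hq.bchar_add_right, ← sq, sq, ← hq.bchar_add_left]
        have hv2 : (v : G) + (v : G) = 0 := by
          rw [← two_smul ℕ]; exact ((mem_Wsub hq).mp v.2).1
        rw [hv2, bchar_zero_left hq]
      rw [h1] at hbvw
      exact units_neg_one_ne_one hbvw.symm
    have inj : Function.Injective (fun v : W => if v = 0 then (0 : Fin 2) else 1) := by
      intro a b hab
      rcases hclaim a with ha | ha <;> rcases hclaim b with hb | hb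
      · rw [ha, hb]
      · exfalso
        have hb0 : b ≠ 0 := fun h => hg₀ (by rw [h] at hb; simpa using hb.symm)
        simp [ha, hb0] at hab
      · exfalso
        have ha0 : a ≠ 0 := fun h => hg₀ (by rw [h] at ha; simpa using ha.symm)
        simp [hb, ha0] at hab
      · exact Subtype.ext (ha.trans hb.symm)
    calc Nat.card W ≤ Nat.card (Fin 2) := Nat.card_le_card_of_injective _ inj
      _ = 2 := by simp
  -- doubling homomorphism
  set D : G →+ G := AddMonoidHom.mk' (fun g => 2 • g) (fun a b => smul_add 2 a b) with hDdef
  have hker : ∀ x : G, x ∈ D.ker ↔ 2 • x = 0 := by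
    intro x
    rw [AddMonoidHom.mem_ker]
    rfl
  have hWle : W ≤ D.ker := fun x hx => (hker x).mpr ((mem_Wsub hq).mp hx).1
  -- kernel bound
  have hkercard : Nat.card D.ker ≤ 2 * Nat.card W := by
    set W' := W.addSubgroupOf D.ker with hW'def
    have hcardW' : Nat.card W' = Nat.card W :=
      Nat.card_congr (AddSubgroup.addSubgroupOfEquivOfLe hWle).toEquiv
    have key : ∀ x y : D.ker ⧸ W', x ≠ 0 → y ≠ 0 → x = y := by
      intro x y hx hy
      induction x using QuotientAddGroup.induction_on with | H u =>
      induction y using QuotientAddGroup.induction_on with | H v =>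
      have hu : u ∉ W' := fun h => hx ((QuotientAddGroup.eq_zero_iff u).mpr h)
      have hv : v ∉ W' := fun h => hy ((QuotientAddGroup.eq_zero_iff v).mpr h)
      have hu2 : 2 • (u : G) = 0 := (hker _).mp u.2
      have hv2 : 2 • (v : G) = 0 := (hker _).mp v.2
      have huq : q (u : G) ^ 2 = -1 := by
        have h4 : (q (u : G) ^ 2) ^ 2 = 1 := by
          rw [← pow_mul]
          exact q_pow_two_mul hq hu2
        refine (units_sq_cases h4).resolve_left ?_
        intro h1
        exact hu (AddSubgroup.mem_addSubgroupOf.mpr ((mem_Wsub hq).mpr ⟨hu2, h1⟩))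
      have hvq : q (v : G) ^ 2 = -1 := by
        have h4 : (q (v : G) ^ 2) ^ 2 = 1 := by
          rw [← pow_mul]
          exact q_pow_two_mul hq hv2
        refine (units_sq_cases h4).resolve_left ?_
        intro h1
        exact hv (AddSubgroup.mem_addSubgroupOf.mpr ((mem_Wsub hq).mpr ⟨hv2, h1⟩))
      have hsub : u - v ∈ W' := by
        rw [AddSubgroup.mem_addSubgroupOf]
        have hcoe : ((u - v : D.ker) : G) = (u : G) - (v : G) := rfl
        rw [hcoe, mem_Wsub]
        constructor
        · rw [smul_sub, hu2, hv2, sub_zero]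
        · rw [sub_eq_add_neg, q_add q, mul_pow, mul_pow, bchar_sq_left hq hu2,
            hq.map_neg, huq, hvq, one_mul, units_neg_one_mul_neg_one]
      exact QuotientAddGroup.eq_iff_sub_mem.mpr hsub
    have hquot : Nat.card (D.ker ⧸ W') ≤ 2 := by
      have inj : Function.Injective
          (fun x : D.ker ⧸ W' => if x = 0 then (0 : Fin 2) else 1) := by
        intro a b hab
        by_cases ha : a = 0 <;> by_cases hb : b = 0
        · rw [ha, hb]
        · simp [ha, hb] at hab
        · simp [ha, hb] at hab
        · exact key a b ha hb
      calc Nat.card (D.ker ⧸ W') ≤ Nat.card (Fin 2) := Nat.card_le_card_of_injective _ inj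
        _ = 2 := by simp
    calc Nat.card D.ker
        = Nat.card (D.ker ⧸ W') * Nat.card W' :=
          AddSubgroup.card_eq_card_quotient_mul_card_addSubgroup W'
      _ ≤ 2 * Nat.card W := by rw [hcardW']; exact Nat.mul_le_mul_right _ hquot
  -- range bound
  have hrange : D.range ≤ W := by
    rintro x ⟨g, rfl⟩
    have hDg : D g = 2 • g := rfl
    rw [hDg, mem_Wsub]
    constructor
    · rw [smul_smul]
      have h := hexp g
      norm_num
      exact h
    · rw [q_nsmul hq 2 g, ← pow_mul]
      have := q_pow_two_mul hq (hexp g)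
      norm_num at this ⊢
      exact this
  have hrangecard : Nat.card D.range ≤ Nat.card W := AddSubgroup.card_le_of_le hrange
  have hcardG : Nat.card G = Nat.card (G ⧸ D.ker) * Nat.card D.ker :=
    AddSubgroup.card_eq_card_quotient_mul_card_addSubgroup D.ker
  have hquotrange : Nat.card (G ⧸ D.ker) = Nat.card D.range :=
    Nat.card_congr (QuotientAddGroup.quotientKerEquivRange D).toEquiv
  by_cases hord : ∃ g₀ : G, 2 • g₀ ≠ 0
  · have h2 := hWcard2 hord
    have hrc : Nat.card D.range ≤ 2 := le_trans hrangecard h2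
    have hkc : Nat.card D.ker ≤ 4 := le_trans hkercard (by omega)
    rw [hcardG, hquotrange]
    calc Nat.card D.range * Nat.card D.ker ≤ 2 * 4 := Nat.mul_le_mul hrc hkc
      _ = 8 := by norm_num
  · push_neg at hord
    have hkertop : D.ker = ⊤ := by
      ext x
      simp only [AddSubgroup.mem_top, iff_true]
      exact (hker x).mpr (hord x)
    have hGker : Nat.card G = Nat.card D.ker := by
      rw [hkertop]
      exact (AddSubgroup.card_top).symm
    rw [hGker]
    omega
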